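/- Suppose f : (0,∞) → ℝ is continuously differentiable, and there exist constants a ∈ (0,1) and A > 0 such that |f'(x)| ≤ A·x^{a−1} for all x > 0, and such that f(x) = Ω_+(x^a) (there is C > 0 with f(x) > C·x^a for arbitrarily large x). Then f(x) = Ω_+^*(x^a): there is C' > 0 such that for every r > 0 there exist arbitrarily large x with f(y) > C'·x^a for all y ∈ [x, x+r). -/

import Mathlib

theorem stmt_3 (f : ℝ → ℝ) (a A : ℝ) (ha0 : 0 < a) (ha1 : a < 1) (hA : 0 < A)
    (hf : ContDiffOn ℝ 1 f (Set.Ioi 0))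
    (hderiv : ∀ x : ℝ, 0 < x → |deriv f x| ≤ A * x ^ (a - 1))
    (hΩ : ∃ C > 0, ∀ X : ℝ, ∃ x > X, f x > C * x ^ a) :
    ∃ C' > 0, ∀ r > 0, ∀ X : ℝ, ∃ x > X,
      ∀ y ∈ Set.Ico x (x + r), f y > C' * x ^ a := by
  obtain ⟨C, hC, hCx⟩ := hΩ
  refine ⟨C / 2, by positivity, fun r hr X => ?_⟩
  obtain ⟨x, hx, hfx⟩ := hCx (max (max X 1) (2 * A * r / C))
  have hx1 : (1 : ℝ) < x := lt_of_le_of_lt (le_max_of_le_left (le_max_right _ _)) hx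
  have hx0 : 0 < x := lt_trans one_pos hx1
  have hxr : 2 * A * r / C < x := lt_of_le_of_lt (le_max_right _ _) hx
  refine ⟨x, lt_of_le_of_lt (le_max_of_le_left (le_max_left _ _)) hx, fun y hy => ?_⟩
  obtain ⟨hxy, hyr⟩ := hy
  -- every point of [x, y] is in Ioi 0
  have hsub : Set.Icc x y ⊆ Set.Ioi 0 := fun t ht => lt_of_lt_of_le hx0 ht.1
  have hdiff : ∀ t ∈ Set.Icc x y, DifferentiableAt ℝ f t := fun t ht =>
    (hf.contDiffAt (isOpen_Ioi.mem_nhds (hsub ht))).differentiableAt one_ne_zero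
  have hbound : ∀ t ∈ Set.Icc x y, ‖deriv f t‖ ≤ A * x ^ (a - 1) := by
    intro t ht
    refine le_trans (hderiv t (hsub ht)) ?_
    exact mul_le_mul_of_nonneg_left
      (Real.rpow_le_rpow_of_nonpos hx0 ht.1 (by linarith)) hA.le
  have hmvt : ‖f x - f y‖ ≤ A * x ^ (a - 1) * ‖x - y‖ :=
    Convex.norm_image_sub_le_of_norm_deriv_le hdiff hbound (convex_Icc x y)
      (Set.right_mem_Icc.2 hxy) (Set.left_mem_Icc.2 hxy)
  have hxy' : ‖x - y‖ ≤ r := by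
    rw [Real.norm_eq_abs, abs_sub_comm, abs_of_nonneg (by linarith)]
    linarith
  have hfy : f y ≥ f x - A * x ^ (a - 1) * r := by
    have h1 : f x - f y ≤ ‖f x - f y‖ := le_abs_self _
    have h2 : A * x ^ (a - 1) * ‖x - y‖ ≤ A * x ^ (a - 1) * r :=
      mul_le_mul_of_nonneg_left hxy' (by positivity)
    linarith
  -- A * x ^ (a-1) * r ≤ C/2 * x ^ a
  have hpow : x ^ (a - 1) * x = x ^ a := by
    nth_rewrite 2 [← Real.rpow_one x]
    rw [← Real.rpow_add hx0]; norm_num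
  have hkey : A * x ^ (a - 1) * r ≤ C / 2 * x ^ a := by
    have h2 : 2 * A * r ≤ C * x := by
      rw [div_lt_iff₀ hC] at hxr; linarith
    have hp : (0:ℝ) < x ^ (a - 1) := Real.rpow_pos_of_pos hx0 _
    calc A * x ^ (a - 1) * r = (2 * A * r) * x ^ (a - 1) / 2 := by ring
      _ ≤ (C * x) * x ^ (a - 1) / 2 := by
          apply div_le_div_of_nonneg_right _ (by norm_num : (0:ℝ) ≤ 2)
          exact mul_le_mul_of_nonneg_right h2 hp.le
      _ = C / 2 * x ^ a := by rw [mul_assoc, mul_comm x (x ^ (a-1)), hpow]; ring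
  have : C * x ^ a - C / 2 * x ^ a = C / 2 * x ^ a := by ring
  linarith
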